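/- For all s_1, s_2 > 0, the span program P_AND(s_1,s_2) computes the two-bit AND function AND_2, and its witness sizes with costs (√s_1, √s_2) are: wsize_{(√s_1,√s_2)}(P_AND(s_1,s_2), x) = √(s_1+s_2) for x ∈ {(1,1), (1,0), (0,1)}, and wsize_{(√s_1,√s_2)}(P_AND(s_1,s_2), (0,0)) = √(s_1+s_2)/2. -/

import Mathlib

noncomputable section

/-- A span program on input bits indexed by `ι`, with a finite-dimensional complex inner
product space `V`, a target vector, free input vectors indexed by `Ifree`, and input
vectors indexed by `Iin j b` (available when the `j`-th input bit equals `b`). -/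
structure SpanProgram (ι : Type) where
  V : Type
  [nacg : NormedAddCommGroup V]
  [ips : InnerProductSpace ℂ V]
  [fd : FiniteDimensional ℂ V]
  Ifree : Type
  [freeFin : Fintype Ifree]
  [freeDec : DecidableEq Ifree]
  Iin : ι → Bool → Type
  [inFin : ∀ j b, Fintype (Iin j b)]
  [inDec : ∀ j b, DecidableEq (Iin j b)]
  target : V
  vfree : Ifree → V
  vin : ∀ j b, Iin j b → V

attribute [instance] SpanProgram.nacg SpanProgram.ips SpanProgram.fd
attribute [instance] SpanProgram.freeFin SpanProgram.freeDec
attribute [instance] SpanProgram.inFin SpanProgram.inDec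

namespace SpanProgram

variable {ι : Type} [Fintype ι] [DecidableEq ι]

/-- The index set `I = I_free ∪ ⋃_{j,b} I_{j,b}` of all input vectors. -/
abbrev Idx (P : SpanProgram ι) : Type := P.Ifree ⊕ Σ j : ι, Σ b : Bool, P.Iin j b

/-- All input vectors, as a single family over `Idx`. -/
def vec (P : SpanProgram ι) : P.Idx → P.V :=
  Sum.elim P.vfree (fun p => P.vin p.1 p.2.1 p.2.2)

/-- `P` evaluates to true on `x` iff the target lies in the span of the available
input vectors (the free ones together with those indexed by `I_{j, x_j}`). -/
def spanned (P : SpanProgram ι) (x : ι → Bool) : Prop :=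
  P.target ∈ Submodule.span ℂ
    (Set.range P.vfree ∪ ⋃ j : ι, Set.range (P.vin j (x j)))

/-- The boolean function computed by `P`. -/
def fP (P : SpanProgram ι) (x : ι → Bool) : Bool :=
  letI := Classical.propDecidable (P.spanned x)
  decide (P.spanned x)

/-- `w : ℂ^I` is a witness for `f_P(x) = 1`: it is supported on available input vectors,
and the input vectors weighted by `w` sum to the target. -/
def IsWitness1 (P : SpanProgram ι) (x : ι → Bool) (w : P.Idx → ℂ) : Prop :=
  (∀ (j : ι) (b : Bool) (i : P.Iin j b), b ≠ x j → w (.inr ⟨j, b, i⟩) = 0) ∧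
  ∑ i : P.Idx, w i • P.vec i = P.target

/-- `w' ∈ V` is a witness for `f_P(x) = 0`: it has unit inner product with the target and
is orthogonal to all available input vectors. -/
def IsWitness0 (P : SpanProgram ι) (x : ι → Bool) (w' : P.V) : Prop :=
  (inner ℂ P.target w' : ℂ) = 1 ∧
  (∀ i : P.Ifree, (inner ℂ (P.vfree i) w' : ℂ) = 0) ∧
  (∀ (j : ι) (i : P.Iin j (x j)), (inner ℂ (P.vin j (x j) i) w' : ℂ) = 0)

/-- `‖S|w⟩‖²`, the size of a `1`-witness `w` with costs `s`. -/
def wval1 (P : SpanProgram ι) (s : ι → ℝ) (w : P.Idx → ℂ) : ℝ :=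
  ∑ j : ι, ∑ b : Bool, ∑ i : P.Iin j b, s j * ‖w (.inr ⟨j, b, i⟩)‖ ^ 2

/-- `1 + ‖S^f|w⟩‖²`, the full size of a `1`-witness `w` with costs `s`. -/
def wval1f (P : SpanProgram ι) (s : ι → ℝ) (w : P.Idx → ℂ) : ℝ :=
  1 + (∑ i : P.Ifree, ‖w (.inl i)‖ ^ 2) + P.wval1 s w

/-- `‖S A†|w'⟩‖²`, the size of a `0`-witness `w'` with costs `s`. -/
def wval0 (P : SpanProgram ι) (s : ι → ℝ) (w' : P.V) : ℝ :=
  ∑ j : ι, ∑ b : Bool, ∑ i : P.Iin j b, s j * ‖(inner ℂ (P.vin j b i) w' : ℂ)‖ ^ 2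

/-- `‖|w'⟩‖² + ‖S A†|w'⟩‖²`, the full size of a `0`-witness `w'` with costs `s`. -/
def wval0f (P : SpanProgram ι) (s : ι → ℝ) (w' : P.V) : ℝ :=
  ‖w'‖ ^ 2 + P.wval0 s w'

/-- The witness size of `P` on input `x` with costs `s`. -/
def wsizex (P : SpanProgram ι) (s : ι → ℝ) (x : ι → Bool) : ℝ :=
  if P.fP x then sInf { r | ∃ w, P.IsWitness1 x w ∧ r = P.wval1 s w }
  else sInf { r | ∃ w', P.IsWitness0 x w' ∧ r = P.wval0 s w' }

/-- The witness size of `P` with costs `s`. -/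
def wsize (P : SpanProgram ι) (s : ι → ℝ) : ℝ := ⨆ x : ι → Bool, P.wsizex s x

/-- The full witness size of `P` on input `x` with costs `s`. -/
def wsizefx (P : SpanProgram ι) (s : ι → ℝ) (x : ι → Bool) : ℝ :=
  if P.fP x then sInf { r | ∃ w, P.IsWitness1 x w ∧ r = P.wval1f s w }
  else sInf { r | ∃ w', P.IsWitness0 x w' ∧ r = P.wval0f s w' }

/-- The full witness size of `P` with costs `s`. -/
def wsizef (P : SpanProgram ι) (s : ι → ℝ) : ℝ := ⨆ x : ι → Bool, P.wsizefx s x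

end SpanProgram

end


instance (b : Bool) : Fintype (cond b Unit Empty) :=
  match b with
  | true => inferInstanceAs (Fintype Unit)
  | false => inferInstanceAs (Fintype Empty)

instance (b : Bool) : DecidableEq (cond b Unit Empty) :=
  match b with
  | true => inferInstanceAs (DecidableEq Unit)
  | false => inferInstanceAs (DecidableEq Empty)

/-- The span program `P_AND(s₁,s₂)` computing two-bit AND: the space is `ℂ²`, the target
is `((s₁/s_p)^{1/4}, (s₂/s_p)^{1/4})` with `s_p = s₁ + s₂`, and the input vectors are
`(1,0) ∈ I_{1,1}` and `(0,1) ∈ I_{2,1}`, with `I_free = I_{1,0} = I_{2,0} = ∅`. -/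
noncomputable def PAND (s1 s2 : ℝ) : SpanProgram (Fin 2) where
  V := EuclideanSpace ℂ (Fin 2)
  Ifree := Empty
  Iin := fun _ b => cond b Unit Empty
  target := WithLp.toLp 2 (fun i => (↑(((if i = 0 then s1 else s2) / (s1 + s2)) ^ ((1 : ℝ)/4)) : ℂ))
  vfree := Empty.elim
  vin := fun j b => match b with
    | true => fun _ => EuclideanSpace.single j 1
    | false => fun i => i.elim


attribute [reducible] PAND

section Aux

open SpanProgram Real

variable (s1 s2 : ℝ)

theorem sum_idx {M : Type} [AddCommMonoid M] (f : (PAND s1 s2).Idx → M) :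
    ∑ i, f i = f (.inr ⟨0, true, ()⟩) + f (.inr ⟨1, true, ()⟩) := by
  show ∑ i : Empty ⊕ Σ j : Fin 2, Σ b : Bool, cond b Unit Empty, f i = _
  rw [Fintype.sum_sum_type]
  rw [show (∑ a : Empty, f (Sum.inl a)) = 0 from Fintype.sum_empty _, zero_add]
  refine Fintype.sum_eq_add _ _ (fun h => by simpa using congrArg Sigma.fst h) ?_
  rintro ⟨j, (_|_), i⟩ ⟨hne1, hne2⟩
  · exact (nomatch i)
  · fin_cases j
    · exact absurd rfl hne1
    · exact absurd rfl hne2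

theorem sum_in_false (j : Fin 2) {M : Type} [AddCommMonoid M]
    (g : (PAND s1 s2).Iin j false → M) : ∑ i, g i = 0 := by
  haveI : IsEmpty ((PAND s1 s2).Iin j false) := ⟨fun i => nomatch i⟩
  exact Fintype.sum_empty g

theorem sum_in_true (j : Fin 2) {M : Type} [AddCommMonoid M]
    (g : (PAND s1 s2).Iin j true → M) : ∑ i, g i = g () := by
  haveI : Unique ((PAND s1 s2).Iin j true) := ⟨⟨()⟩, fun _ => rfl⟩
  exact Fintype.sum_unique g

theorem sum_jbi {M : Type} [AddCommMonoid M]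
    (g : ∀ (j : Fin 2) (b : Bool), (PAND s1 s2).Iin j b → M) :
    ∑ j, ∑ b, ∑ i, g j b i = g 0 true () + g 1 true () := by
  rw [Fin.sum_univ_two, Fintype.sum_bool, Fintype.sum_bool,
    sum_in_false, sum_in_false, sum_in_true, sum_in_true, add_zero, add_zero]

end Aux
section Aux2
open SpanProgram Real
variable (s1 s2 : ℝ)

/-- The entries of the target of `PAND`. -/
noncomputable def tv (i : Fin 2) : ℝ := ((if i = 0 then s1 else s2) / (s1 + s2)) ^ ((1 : ℝ)/4)

/-- The target of `PAND` as a Euclidean-space vector. -/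
noncomputable def tvec : EuclideanSpace ℂ (Fin 2) := WithLp.toLp 2 (fun i => (tv s1 s2 i : ℂ))

theorem tvec_apply (i : Fin 2) : tvec s1 s2 i = ((tv s1 s2 i : ℝ) : ℂ) := rfl

theorem target_eq : (PAND s1 s2).target = tvec s1 s2 := rfl

theorem vin_true (j : Fin 2) (i : (PAND s1 s2).Iin j true) :
    (PAND s1 s2).vin j true i = EuclideanSpace.single j 1 := rfl

theorem tv_pos (h1 : 0 < s1) (h2 : 0 < s2) (i : Fin 2) : 0 < tv s1 s2 i := by
  apply Real.rpow_pos_of_pos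
  have : 0 < s1 + s2 := by linarith
  split <;> positivity

theorem not_spanned (h1 : 0 < s1) (h2 : 0 < s2) (x : Fin 2 → Bool) (k : Fin 2)
    (hk : x k = false) : ¬ (PAND s1 s2).spanned x := by
  intro hsp
  have hle : Submodule.span ℂ
      (Set.range (PAND s1 s2).vfree ∪ ⋃ j, Set.range ((PAND s1 s2).vin j (x j)))
      ≤ LinearMap.ker (EuclideanSpace.projₗ (𝕜 := ℂ) k) := by
    rw [Submodule.span_le]
    rintro v (⟨i, rfl⟩ | hv)
    · exact (nomatch i)
    · simp only [Set.mem_iUnion, Set.mem_range] at hv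
      obtain ⟨j, i, rfl⟩ := hv
      revert i
      generalize hb : x j = b
      intro i
      cases b
      · exact (nomatch i)
      · have hjk : j ≠ k := fun h => by rw [h, hk] at hb; exact Bool.noConfusion hb
        show EuclideanSpace.single j (1:ℂ) ∈ _
        simp only [SetLike.mem_coe, LinearMap.mem_ker]
        show EuclideanSpace.single j (1:ℂ) k = 0
        rw [EuclideanSpace.single_apply, if_neg (Ne.symm hjk)]
  have h0 := hle hsp
  simp only [LinearMap.mem_ker] at h0
  have h0' : (PAND s1 s2).target k = 0 := h0
  rw [target_eq, tvec_apply] at h0'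
  have := tv_pos s1 s2 h1 h2 k
  simp only [Complex.ofReal_eq_zero] at h0'
  exact absurd h0' (ne_of_gt this)

theorem spanned_tt (x : Fin 2 → Bool) (hx0 : x 0 = true) (hx1 : x 1 = true) :
    (PAND s1 s2).spanned x := by
  unfold SpanProgram.spanned
  have htarget : (PAND s1 s2).target
      = ((tv s1 s2 0 : ℂ) • EuclideanSpace.single 0 1 + (tv s1 s2 1 : ℂ) • EuclideanSpace.single 1 1
        : EuclideanSpace ℂ (Fin 2)) := by
    rw [target_eq]
    ext i
    fin_cases i
    · show tvec s1 s2 0 = ((tv s1 s2 0 : ℂ) * 1 + (tv s1 s2 1 : ℂ) * 0 : ℂ)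
      rw [tvec_apply]; norm_num
    · show tvec s1 s2 1 = ((tv s1 s2 0 : ℂ) * 0 + (tv s1 s2 1 : ℂ) * 1 : ℂ)
      rw [tvec_apply]; norm_num
  rw [htarget]
  have hm : ∀ j : Fin 2, x j = true → (EuclideanSpace.single j (1:ℂ) : EuclideanSpace ℂ (Fin 2))
      ∈ (Set.range (PAND s1 s2).vfree ∪ ⋃ j, Set.range ((PAND s1 s2).vin j (x j))) := by
    intro j hxj
    refine Or.inr (Set.mem_iUnion.2 ⟨j, ?_⟩)
    rw [hxj]
    exact ⟨(), rfl⟩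
  exact Submodule.add_mem _
    (Submodule.smul_mem _ _ (Submodule.subset_span (hm 0 hx0)))
    (Submodule.smul_mem _ _ (Submodule.subset_span (hm 1 hx1)))

theorem fP_iff (x : Fin 2 → Bool) : (PAND s1 s2).fP x = true ↔ (PAND s1 s2).spanned x := by
  unfold SpanProgram.fP
  exact @decide_eq_true_iff _ (Classical.propDecidable _)

theorem fP_eq (h1 : 0 < s1) (h2 : 0 < s2) (x : Fin 2 → Bool) :
    (PAND s1 s2).fP x = (x 0 && x 1) := by
  cases hx0 : x 0
  · rw [Bool.false_and, ← Bool.not_eq_true, fP_iff]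
    exact not_spanned s1 s2 h1 h2 x 0 hx0
  · cases hx1 : x 1
    · rw [Bool.true_and, ← Bool.not_eq_true, fP_iff]
      exact not_spanned s1 s2 h1 h2 x 1 hx1
    · rw [Bool.true_and, fP_iff]
      exact spanned_tt s1 s2 x hx0 hx1

end Aux2
section Aux3
open SpanProgram Real
variable (s1 s2 : ℝ)

theorem tv_sq (h1 : 0 < s1) (h2 : 0 < s2) (i : Fin 2) :
    tv s1 s2 i ^ 2 = Real.sqrt (if i = 0 then s1 else s2) / Real.sqrt (s1 + s2) := by
  have hsp : 0 < s1 + s2 := by linarith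
  have ht : 0 < (if i = 0 then s1 else s2) := by split <;> assumption
  unfold tv
  rw [sq, ← Real.rpow_add (div_pos ht hsp), show (1:ℝ)/4 + 1/4 = 1/2 by norm_num,
    ← Real.sqrt_eq_rpow, Real.sqrt_div ht.le]

theorem wval1_eq (w : (PAND s1 s2).Idx → ℂ) :
    (PAND s1 s2).wval1 ![Real.sqrt s1, Real.sqrt s2] w
      = Real.sqrt s1 * ‖w (.inr ⟨0, true, ()⟩)‖ ^ 2
        + Real.sqrt s2 * ‖w (.inr ⟨1, true, ()⟩)‖ ^ 2 := by
  unfold SpanProgram.wval1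
  rw [sum_jbi]
  norm_num

theorem wval0_eq (w' : (PAND s1 s2).V) :
    (PAND s1 s2).wval0 ![Real.sqrt s1, Real.sqrt s2] w'
      = Real.sqrt s1 * ‖w' 0‖ ^ 2 + Real.sqrt s2 * ‖w' 1‖ ^ 2 := by
  unfold SpanProgram.wval0
  rw [sum_jbi]
  norm_num
  show Real.sqrt s1 * ‖(inner ℂ (EuclideanSpace.single 0 (1:ℂ)) (w' : EuclideanSpace ℂ (Fin 2)) : ℂ)‖ ^ 2
      + Real.sqrt s2 * ‖(inner ℂ (EuclideanSpace.single 1 (1:ℂ)) (w' : EuclideanSpace ℂ (Fin 2)) : ℂ)‖ ^ 2 = _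
  rw [EuclideanSpace.inner_single_left, EuclideanSpace.inner_single_left]
  simp

end Aux3
section Aux4
open SpanProgram
variable (s1 s2 : ℝ)

theorem tv0_sq (h1 : 0 < s1) (h2 : 0 < s2) :
    tv s1 s2 0 ^ 2 = Real.sqrt s1 / Real.sqrt (s1 + s2) := by
  rw [tv_sq s1 s2 h1 h2 0]; norm_num

theorem tv1_sq (h1 : 0 < s1) (h2 : 0 < s2) :
    tv s1 s2 1 ^ 2 = Real.sqrt s2 / Real.sqrt (s1 + s2) := by
  rw [tv_sq s1 s2 h1 h2 1]; norm_num

theorem tv0_sq_mul (h1 : 0 < s1) (h2 : 0 < s2) :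
    tv s1 s2 0 ^ 2 * Real.sqrt (s1 + s2) = Real.sqrt s1 := by
  rw [tv0_sq s1 s2 h1 h2]
  have : Real.sqrt (s1 + s2) ≠ 0 := by positivity
  field_simp

theorem tv1_sq_mul (h1 : 0 < s1) (h2 : 0 < s2) :
    tv s1 s2 1 ^ 2 * Real.sqrt (s1 + s2) = Real.sqrt s2 := by
  rw [tv1_sq s1 s2 h1 h2]
  have : Real.sqrt (s1 + s2) ≠ 0 := by positivity
  field_simp

theorem norm_coe_tv (h1 : 0 < s1) (h2 : 0 < s2) (i : Fin 2) :
    ‖((tv s1 s2 i : ℝ) : ℂ)‖ = tv s1 s2 i := by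
  rw [Complex.norm_real, Real.norm_eq_abs, abs_of_pos (tv_pos s1 s2 h1 h2 i)]

theorem alg_tt (h1 : 0 < s1) (h2 : 0 < s2) :
    Real.sqrt s1 * tv s1 s2 0 ^ 2 + Real.sqrt s2 * tv s1 s2 1 ^ 2 = Real.sqrt (s1 + s2) := by
  have hsp : (0:ℝ) < s1 + s2 := by linarith
  rw [tv0_sq s1 s2 h1 h2, tv1_sq s1 s2 h1 h2]
  have e1 : Real.sqrt s1 * Real.sqrt s1 = s1 := Real.mul_self_sqrt h1.le
  have e2 : Real.sqrt s2 * Real.sqrt s2 = s2 := Real.mul_self_sqrt h2.le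
  have e3 : Real.sqrt (s1 + s2) * Real.sqrt (s1 + s2) = s1 + s2 := Real.mul_self_sqrt hsp.le
  have hne : Real.sqrt (s1 + s2) ≠ 0 := by positivity
  field_simp
  rw [Real.sq_sqrt h1.le, Real.sq_sqrt h2.le, Real.sq_sqrt hsp.le]

/-- Witness-value set for input `(1,1)`. -/
theorem set_tt (h1 : 0 < s1) (h2 : 0 < s2) :
    {r | ∃ w, (PAND s1 s2).IsWitness1 ![true, true] w
        ∧ r = (PAND s1 s2).wval1 ![Real.sqrt s1, Real.sqrt s2] w}
      = {Real.sqrt (s1 + s2)} := by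
  ext r
  simp only [Set.mem_setOf_eq, Set.mem_singleton_iff]
  constructor
  · rintro ⟨w, ⟨-, hsum⟩, rfl⟩
    rw [sum_idx] at hsum
    have hsum' : w (.inr ⟨0, true, ()⟩) • EuclideanSpace.single 0 (1:ℂ)
        + w (.inr ⟨1, true, ()⟩) • EuclideanSpace.single 1 1
        = tvec s1 s2 := hsum
    have h0 : w (.inr ⟨0, true, ()⟩) * 1 + w (.inr ⟨1, true, ()⟩) * 0 = ((tv s1 s2 0 : ℝ) : ℂ) :=
      congrArg (fun v => v 0) hsum'
    have h1' : w (.inr ⟨0, true, ()⟩) * 0 + w (.inr ⟨1, true, ()⟩) * 1 = ((tv s1 s2 1 : ℝ) : ℂ) :=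
      congrArg (fun v => v 1) hsum'
    norm_num at h0 h1'
    rw [wval1_eq, h0, h1', norm_coe_tv s1 s2 h1 h2, norm_coe_tv s1 s2 h1 h2]
    exact alg_tt s1 s2 h1 h2
  · rintro rfl
    refine ⟨Sum.elim (fun e => e.elim) (fun p => (tv s1 s2 p.1 : ℂ)), ⟨?_, ?_⟩, ?_⟩
    · rintro j (_|_) i hb
      · exact (nomatch i)
      · exfalso; apply hb; fin_cases j <;> rfl
    · rw [sum_idx]
      have key : ((tv s1 s2 0 : ℂ) • EuclideanSpace.single 0 (1:ℂ)
          + (tv s1 s2 1 : ℂ) • EuclideanSpace.single 1 1 : EuclideanSpace ℂ (Fin 2))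
          = tvec s1 s2 := by
        ext i
        fin_cases i
        · show ((tv s1 s2 0 : ℂ) * 1 + (tv s1 s2 1 : ℂ) * 0 : ℂ) = ((tv s1 s2 0 : ℝ) : ℂ)
          norm_num
        · show ((tv s1 s2 0 : ℂ) * 0 + (tv s1 s2 1 : ℂ) * 1 : ℂ) = ((tv s1 s2 1 : ℝ) : ℂ)
          norm_num
      exact key
    · rw [wval1_eq]
      show Real.sqrt (s1+s2) = Real.sqrt s1 * ‖((tv s1 s2 0 : ℝ) : ℂ)‖ ^ 2
          + Real.sqrt s2 * ‖((tv s1 s2 1 : ℝ) : ℂ)‖ ^ 2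
      rw [norm_coe_tv s1 s2 h1 h2, norm_coe_tv s1 s2 h1 h2]
      exact (alg_tt s1 s2 h1 h2).symm

end Aux4
section Aux5
open SpanProgram
variable (s1 s2 : ℝ)

theorem tv_ne (h1 : 0 < s1) (h2 : 0 < s2) (i : Fin 2) : ((tv s1 s2 i : ℝ) : ℂ) ≠ 0 :=
  Complex.ofReal_ne_zero.2 (tv_pos s1 s2 h1 h2 i).ne'

theorem inner_target (h1 : 0 < s1) (h2 : 0 < s2) (w' : (PAND s1 s2).V)
    (htgt : (inner ℂ (PAND s1 s2).target w' : ℂ) = 1) :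
    ((tv s1 s2 0 : ℝ) : ℂ) * w' 0 + ((tv s1 s2 1 : ℝ) : ℂ) * w' 1 = 1 := by
  have h : (inner ℂ (tvec s1 s2) w' : ℂ) = 1 := htgt
  rw [PiLp.inner_apply, Fin.sum_univ_two] at h
  simpa [tvec_apply, RCLike.inner_apply, Complex.conj_ofReal, mul_comm] using h

theorem alg_tf (h1 : 0 < s1) (h2 : 0 < s2) :
    Real.sqrt s2 * ((tv s1 s2 1)⁻¹) ^ 2 = Real.sqrt (s1 + s2) := by
  have hsp : (0:ℝ) < s1 + s2 := by linarith
  rw [inv_pow, tv1_sq s1 s2 h1 h2, inv_div]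
  have hs2 : Real.sqrt s2 ≠ 0 := by positivity
  field_simp

theorem alg_ft (h1 : 0 < s1) (h2 : 0 < s2) :
    Real.sqrt s1 * ((tv s1 s2 0)⁻¹) ^ 2 = Real.sqrt (s1 + s2) := by
  have hsp : (0:ℝ) < s1 + s2 := by linarith
  rw [inv_pow, tv0_sq s1 s2 h1 h2, inv_div]
  have hs1 : Real.sqrt s1 ≠ 0 := by positivity
  field_simp

/-- Witness-value set for input `(1,0)`. -/
theorem set_tf (h1 : 0 < s1) (h2 : 0 < s2) :
    {r | ∃ w', (PAND s1 s2).IsWitness0 ![true, false] w'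
        ∧ r = (PAND s1 s2).wval0 ![Real.sqrt s1, Real.sqrt s2] w'}
      = {Real.sqrt (s1 + s2)} := by
  ext r
  simp only [Set.mem_setOf_eq, Set.mem_singleton_iff]
  constructor
  · rintro ⟨w', ⟨htgt, -, hin⟩, rfl⟩
    have hw0 : w' 0 = (0:ℂ) := by
      have h : (inner ℂ (EuclideanSpace.single 0 (1:ℂ)) w' : ℂ) = 0 := hin 0 ()
      rw [EuclideanSpace.inner_single_left] at h
      simpa using h
    have ht' := inner_target s1 s2 h1 h2 w' htgt
    rw [hw0, mul_zero, zero_add] at ht'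
    have hw1 : w' 1 = ((tv s1 s2 1 : ℝ) : ℂ)⁻¹ := eq_inv_of_mul_eq_one_left (by
      rw [mul_comm]; exact ht')
    rw [wval0_eq, hw0, hw1, norm_zero, norm_inv, norm_coe_tv s1 s2 h1 h2]
    rw [show (0:ℝ)^2 = 0 by norm_num, mul_zero, zero_add]
    exact alg_tf s1 s2 h1 h2
  · rintro rfl
    refine ⟨EuclideanSpace.single 1 ((tv s1 s2 1 : ℝ) : ℂ)⁻¹, ⟨?_, ?_, ?_⟩, ?_⟩
    · have h : (inner ℂ (tvec s1 s2)
          (EuclideanSpace.single 1 ((tv s1 s2 1 : ℝ) : ℂ)⁻¹) : ℂ) = 1 := by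
        rw [EuclideanSpace.inner_single_right]
        simp only [tvec_apply, Complex.conj_ofReal]
        exact inv_mul_cancel₀ (tv_ne s1 s2 h1 h2 1)
      exact h
    · intro i; exact (nomatch i)
    · intro j i
      fin_cases j
      · have h : (inner ℂ (EuclideanSpace.single 0 (1:ℂ))
            (EuclideanSpace.single 1 ((tv s1 s2 1 : ℝ) : ℂ)⁻¹ : EuclideanSpace ℂ (Fin 2)) : ℂ)
            = 0 := by
          rw [EuclideanSpace.inner_single_left]
          simp [EuclideanSpace.single_apply]
        exact h
      · exact (nomatch i)
    · rw [wval0_eq]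
      have e0 : (EuclideanSpace.single 1 ((tv s1 s2 1 : ℝ) : ℂ)⁻¹ : EuclideanSpace ℂ (Fin 2)) 0
          = 0 := by simp [EuclideanSpace.single_apply]
      have e1 : (EuclideanSpace.single 1 ((tv s1 s2 1 : ℝ) : ℂ)⁻¹ : EuclideanSpace ℂ (Fin 2)) 1
          = ((tv s1 s2 1 : ℝ) : ℂ)⁻¹ := by simp [EuclideanSpace.single_apply]
      rw [e0, e1, norm_zero, norm_inv, norm_coe_tv s1 s2 h1 h2]
      rw [show (0:ℝ)^2 = 0 by norm_num, mul_zero, zero_add]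
      exact (alg_tf s1 s2 h1 h2).symm

/-- Witness-value set for input `(0,1)`. -/
theorem set_ft (h1 : 0 < s1) (h2 : 0 < s2) :
    {r | ∃ w', (PAND s1 s2).IsWitness0 ![false, true] w'
        ∧ r = (PAND s1 s2).wval0 ![Real.sqrt s1, Real.sqrt s2] w'}
      = {Real.sqrt (s1 + s2)} := by
  ext r
  simp only [Set.mem_setOf_eq, Set.mem_singleton_iff]
  constructor
  · rintro ⟨w', ⟨htgt, -, hin⟩, rfl⟩
    have hw1 : w' 1 = (0:ℂ) := by
      have h : (inner ℂ (EuclideanSpace.single 1 (1:ℂ)) w' : ℂ) = 0 := hin 1 ()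
      rw [EuclideanSpace.inner_single_left] at h
      simpa using h
    have ht' := inner_target s1 s2 h1 h2 w' htgt
    rw [hw1, mul_zero, add_zero] at ht'
    have hw0 : w' 0 = ((tv s1 s2 0 : ℝ) : ℂ)⁻¹ := eq_inv_of_mul_eq_one_left (by
      rw [mul_comm]; exact ht')
    rw [wval0_eq, hw0, hw1, norm_zero, norm_inv, norm_coe_tv s1 s2 h1 h2]
    rw [show (0:ℝ)^2 = 0 by norm_num, mul_zero, add_zero]
    exact alg_ft s1 s2 h1 h2
  · rintro rfl
    refine ⟨EuclideanSpace.single 0 ((tv s1 s2 0 : ℝ) : ℂ)⁻¹, ⟨?_, ?_, ?_⟩, ?_⟩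
    · have h : (inner ℂ (tvec s1 s2)
          (EuclideanSpace.single 0 ((tv s1 s2 0 : ℝ) : ℂ)⁻¹) : ℂ) = 1 := by
        rw [EuclideanSpace.inner_single_right]
        simp only [tvec_apply, Complex.conj_ofReal]
        exact inv_mul_cancel₀ (tv_ne s1 s2 h1 h2 0)
      exact h
    · intro i; exact (nomatch i)
    · intro j i
      fin_cases j
      · exact (nomatch i)
      · have h : (inner ℂ (EuclideanSpace.single 1 (1:ℂ))
            (EuclideanSpace.single 0 ((tv s1 s2 0 : ℝ) : ℂ)⁻¹ : EuclideanSpace ℂ (Fin 2)) : ℂ)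
            = 0 := by
          rw [EuclideanSpace.inner_single_left]
          simp [EuclideanSpace.single_apply]
        exact h
    · rw [wval0_eq]
      have e0 : (EuclideanSpace.single 0 ((tv s1 s2 0 : ℝ) : ℂ)⁻¹ : EuclideanSpace ℂ (Fin 2)) 0
          = ((tv s1 s2 0 : ℝ) : ℂ)⁻¹ := by simp [EuclideanSpace.single_apply]
      have e1 : (EuclideanSpace.single 0 ((tv s1 s2 0 : ℝ) : ℂ)⁻¹ : EuclideanSpace ℂ (Fin 2)) 1
          = 0 := by simp [EuclideanSpace.single_apply]
      rw [e0, e1, norm_zero, norm_inv, norm_coe_tv s1 s2 h1 h2]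
      rw [show (0:ℝ)^2 = 0 by norm_num, mul_zero, add_zero]
      exact (alg_ft s1 s2 h1 h2).symm

end Aux5
section Aux6
open SpanProgram
variable (s1 s2 : ℝ)

/-- The optimal `0`-witness for input `(0,0)`. -/
noncomputable def wff : EuclideanSpace ℂ (Fin 2) := WithLp.toLp 2 fun i =>
  ((tv s1 s2 i * Real.sqrt (s1 + s2) / (2 * Real.sqrt (if i = 0 then s1 else s2)) : ℝ) : ℂ)

theorem wff_apply (i : Fin 2) : wff s1 s2 i
    = ((tv s1 s2 i * Real.sqrt (s1 + s2) / (2 * Real.sqrt (if i = 0 then s1 else s2)) : ℝ) : ℂ) :=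
  rfl

theorem ff_lower (h1 : 0 < s1) (h2 : 0 < s2) (w' : (PAND s1 s2).V)
    (htgt : (inner ℂ (PAND s1 s2).target w' : ℂ) = 1) :
    Real.sqrt (s1 + s2) / 2
      ≤ (PAND s1 s2).wval0 ![Real.sqrt s1, Real.sqrt s2] w' := by
  have hsp : (0:ℝ) < s1 + s2 := by linarith
  have ht' := inner_target s1 s2 h1 h2 w' htgt
  have hub : (1:ℝ) ≤ tv s1 s2 0 * ‖w' 0‖ + tv s1 s2 1 * ‖w' 1‖ := by
    calc (1:ℝ) = ‖(1:ℂ)‖ := by simp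
    _ = ‖((tv s1 s2 0 : ℝ) : ℂ) * w' 0 + ((tv s1 s2 1 : ℝ) : ℂ) * w' 1‖ := by rw [ht']
    _ ≤ ‖((tv s1 s2 0 : ℝ) : ℂ) * w' 0‖ + ‖((tv s1 s2 1 : ℝ) : ℂ) * w' 1‖ := norm_add_le _ _
    _ = tv s1 s2 0 * ‖w' 0‖ + tv s1 s2 1 * ‖w' 1‖ := by
        rw [norm_mul, norm_mul, norm_coe_tv s1 s2 h1 h2, norm_coe_tv s1 s2 h1 h2]
  rw [wval0_eq]
  have key : 1 ≤ 2 * (tv s1 s2 0 ^ 2 * ‖w' 0‖ ^ 2 + tv s1 s2 1 ^ 2 * ‖w' 1‖ ^ 2) := by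
    nlinarith [sq_nonneg (tv s1 s2 0 * ‖w' 0‖ - tv s1 s2 1 * ‖w' 1‖), hub,
      mul_nonneg (tv_pos s1 s2 h1 h2 0).le (norm_nonneg (w' 0)),
      mul_nonneg (tv_pos s1 s2 h1 h2 1).le (norm_nonneg (w' 1))]
  have A2 : tv s1 s2 0 ^ 2 * Real.sqrt (s1 + s2) * ‖w' 0‖ ^ 2
      = Real.sqrt s1 * ‖w' 0‖ ^ 2 := by rw [tv0_sq_mul s1 s2 h1 h2]
  have B2 : tv s1 s2 1 ^ 2 * Real.sqrt (s1 + s2) * ‖w' 1‖ ^ 2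
      = Real.sqrt s2 * ‖w' 1‖ ^ 2 := by rw [tv1_sq_mul s1 s2 h1 h2]
  nlinarith [key, A2, B2, Real.sqrt_pos.2 hsp]

theorem ff_mem (h1 : 0 < s1) (h2 : 0 < s2) :
    (PAND s1 s2).IsWitness0 ![false, false] (wff s1 s2)
      ∧ (PAND s1 s2).wval0 ![Real.sqrt s1, Real.sqrt s2] (wff s1 s2)
        = Real.sqrt (s1 + s2) / 2 := by
  have hsp : (0:ℝ) < s1 + s2 := by linarith
  have hs1 : Real.sqrt s1 ≠ 0 := by positivity
  have hs2 : Real.sqrt s2 ≠ 0 := by positivity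
  have hssp : Real.sqrt (s1 + s2) ≠ 0 := by positivity
  have A := tv0_sq_mul s1 s2 h1 h2
  have B := tv1_sq_mul s1 s2 h1 h2
  refine ⟨⟨?_, ?_, ?_⟩, ?_⟩
  · have h : (inner ℂ (tvec s1 s2) (wff s1 s2) : ℂ) = 1 := by
      rw [PiLp.inner_apply, Fin.sum_univ_two]
      simp only [tvec_apply, wff_apply, RCLike.inner_apply, Complex.conj_ofReal]
      norm_num
      norm_cast
      field_simp
      rw [div_add_div _ _ (by exact_mod_cast hs1) (by exact_mod_cast hs2),
        div_eq_iff (by exact_mod_cast mul_ne_zero hs1 hs2)]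
      push_cast
      have A' : ((tv s1 s2 0 : ℂ)) ^ 2 * (Real.sqrt (s1 + s2) : ℂ) = (Real.sqrt s1 : ℂ) := by
        exact_mod_cast A
      have B' : ((tv s1 s2 1 : ℂ)) ^ 2 * (Real.sqrt (s1 + s2) : ℂ) = (Real.sqrt s2 : ℂ) := by
        exact_mod_cast B
      linear_combination (Real.sqrt s2 : ℂ) * A' + (Real.sqrt s1 : ℂ) * B'
    exact h
  · intro i; exact (nomatch i)
  · intro j i
    fin_cases j
    · exact (nomatch i)
    · exact (nomatch i)
  · rw [wval0_eq]
    have e0 : ‖wff s1 s2 0‖ = tv s1 s2 0 * Real.sqrt (s1 + s2) / (2 * Real.sqrt s1) := by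
      rw [wff_apply, if_pos rfl, Complex.norm_real, Real.norm_eq_abs, abs_of_nonneg
        (div_nonneg (mul_nonneg (tv_pos s1 s2 h1 h2 0).le (Real.sqrt_nonneg _)) (by positivity))]
    have e1 : ‖wff s1 s2 1‖ = tv s1 s2 1 * Real.sqrt (s1 + s2) / (2 * Real.sqrt s2) := by
      rw [wff_apply, if_neg (by decide), Complex.norm_real, Real.norm_eq_abs, abs_of_nonneg
        (div_nonneg (mul_nonneg (tv_pos s1 s2 h1 h2 1).le (Real.sqrt_nonneg _)) (by positivity))]
    rw [e0, e1]
    field_simp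
    linear_combination
      (Real.sqrt s2) * A
      + (Real.sqrt s1) * B

end Aux6

/-- `P_AND(s₁,s₂)` computes `AND₂` and its witness sizes with costs
`(√s₁, √s₂)` are `√(s₁+s₂)` on inputs `11, 10, 01` and `√(s₁+s₂)/2` on input `00`. -/
theorem PAND_witness_sizes (s1 s2 : ℝ) (h1 : 0 < s1) (h2 : 0 < s2) :
    (∀ x, (PAND s1 s2).fP x = (x 0 && x 1)) ∧
    (PAND s1 s2).wsizex ![Real.sqrt s1, Real.sqrt s2] ![true, true]
      = Real.sqrt (s1 + s2) ∧
    (PAND s1 s2).wsizex ![Real.sqrt s1, Real.sqrt s2] ![true, false]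
      = Real.sqrt (s1 + s2) ∧
    (PAND s1 s2).wsizex ![Real.sqrt s1, Real.sqrt s2] ![false, true]
      = Real.sqrt (s1 + s2) ∧
    (PAND s1 s2).wsizex ![Real.sqrt s1, Real.sqrt s2] ![false, false]
      = Real.sqrt (s1 + s2) / 2 := by
  refine ⟨fP_eq s1 s2 h1 h2, ?_, ?_, ?_, ?_⟩
  · have hfp : (PAND s1 s2).fP ![true, true] = true := by
      rw [fP_eq s1 s2 h1 h2]; rfl
    simp only [SpanProgram.wsizex, hfp, if_true]
    rw [set_tt s1 s2 h1 h2]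
    exact csInf_singleton _
  · have hfp : (PAND s1 s2).fP ![true, false] = false := by
      rw [fP_eq s1 s2 h1 h2]; rfl
    simp only [SpanProgram.wsizex, hfp, Bool.false_eq_true, if_false]
    rw [set_tf s1 s2 h1 h2]
    exact csInf_singleton _
  · have hfp : (PAND s1 s2).fP ![false, true] = false := by
      rw [fP_eq s1 s2 h1 h2]; rfl
    simp only [SpanProgram.wsizex, hfp, Bool.false_eq_true, if_false]
    rw [set_ft s1 s2 h1 h2]
    exact csInf_singleton _
  · have hfp : (PAND s1 s2).fP ![false, false] = false := by
      rw [fP_eq s1 s2 h1 h2]; rfl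
    simp only [SpanProgram.wsizex, hfp, Bool.false_eq_true, if_false]
    have hmem : Real.sqrt (s1 + s2) / 2 ∈
        {r | ∃ w', (PAND s1 s2).IsWitness0 ![false, false] w'
          ∧ r = (PAND s1 s2).wval0 ![Real.sqrt s1, Real.sqrt s2] w'} :=
      ⟨wff s1 s2, (ff_mem s1 s2 h1 h2).1, ((ff_mem s1 s2 h1 h2).2).symm⟩
    have hlb : ∀ r ∈ {r | ∃ w', (PAND s1 s2).IsWitness0 ![false, false] w'
          ∧ r = (PAND s1 s2).wval0 ![Real.sqrt s1, Real.sqrt s2] w'},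
        Real.sqrt (s1 + s2) / 2 ≤ r := by
      rintro r ⟨w', hw, rfl⟩
      exact ff_lower s1 s2 h1 h2 w' hw.1
    exact le_antisymm (csInf_le ⟨_, hlb⟩ hmem) (le_csInf ⟨_, hmem⟩ hlb)
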